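/- Let k'' be an infinite field and a, b positive integers. Let f ∈ k'[[x_1,…,x_{d−1}, x_d]] (k' ⊆ k'') be a formal power series whose support is contained in the half-space {(α, s) : a|α| + b s ≥ aN} and meets the hyperplane a|α| + b s = aN, where |α| = α_1+⋯+α_{d−1}. Then for sufficiently general λ_1,…,λ_{d−1} ∈ k'', the substitution β(f) ∈ k''[[t]] defined by x_i ↦ λ_i t^a (i < d), x_d ↦ t^b has order exactly aN; and if the support of f is not contained in that half-space, then for general λ_i the order of β(f) is strictly less than aN. -/

import Mathlib

/-- The substitution `β : k'[[x₁,…,x_e,x_d]] → k''[[t]]` determined by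
`x_i ↦ λ_i t^a` (for `i ≤ e`) and `x_d ↦ t^b`, described on coefficients: the
coefficient of `t^N` in `β(f)` is `Σ_{a|α|+bs=N} (∏ λ_i^{α_i}) ι(coeff_{(α,s)} f)`. -/
noncomputable def weightedSubst (e a b : ℕ) {k' k'' : Type*} [CommRing k'] [CommRing k'']
    (ι : k' →+* k'') (lam : Fin e → k'') (f : MvPowerSeries (Fin (e + 1)) k') :
    PowerSeries k'' :=
  PowerSeries.mk fun N =>
    ∑ γ ∈ (Finset.Iic (Finsupp.equivFunOnFinite.symm fun _ : Fin (e + 1) => N)).filter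
        (fun γ => a * (∑ i : Fin e, γ (Fin.castSucc i)) + b * γ (Fin.last e) = N),
      (∏ i : Fin e, lam i ^ γ (Fin.castSucc i)) * ι (MvPowerSeries.coeff γ f)


noncomputable def polyAt (e a b : ℕ) {k' k'' : Type*} [CommRing k'] [CommRing k'']
    (ι : k' →+* k'') (f : MvPowerSeries (Fin (e + 1)) k') (M : ℕ) :
    MvPolynomial (Fin e) k'' :=
  ∑ γ ∈ (Finset.Iic (Finsupp.equivFunOnFinite.symm fun _ : Fin (e + 1) => M)).filter
      (fun γ => a * (∑ i : Fin e, γ (Fin.castSucc i)) + b * γ (Fin.last e) = M),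
    MvPolynomial.monomial (Finsupp.equivFunOnFinite.symm fun i : Fin e => γ (Fin.castSucc i))
      (ι (MvPowerSeries.coeff γ f))

lemma eval_polyAt (e a b : ℕ) {k' k'' : Type*} [CommRing k'] [CommRing k'']
    (ι : k' →+* k'') (f : MvPowerSeries (Fin (e + 1)) k') (lam : Fin e → k'') (M : ℕ) :
    MvPolynomial.eval lam (polyAt e a b ι f M) =
      PowerSeries.coeff M (weightedSubst e a b ι lam f) := by
  simp only [polyAt, weightedSubst, PowerSeries.coeff_mk, map_sum, MvPolynomial.eval_monomial,
    Finsupp.prod_pow, Finsupp.coe_equivFunOnFinite_symm]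
  exact Finset.sum_congr rfl fun γ _ => mul_comm _ _

lemma polyAt_ne_zero (e a b : ℕ) (hapos : 0 < a) (hbpos : 0 < b)
    {k' k'' : Type*} [Field k'] [Field k''] (ι : k' →+* k'')
    (f : MvPowerSeries (Fin (e + 1)) k') (M : ℕ) (γ₀ : Fin (e + 1) →₀ ℕ)
    (h1 : MvPowerSeries.coeff γ₀ f ≠ 0)
    (h2 : a * (∑ i : Fin e, γ₀ (Fin.castSucc i)) + b * γ₀ (Fin.last e) = M) :
    polyAt e a b ι f M ≠ 0 := by
  classical
  intro h0
  have hmem : γ₀ ∈ (Finset.Iic (Finsupp.equivFunOnFinite.symm fun _ : Fin (e + 1) => M)).filter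
      (fun γ => a * (∑ i : Fin e, γ (Fin.castSucc i)) + b * γ (Fin.last e) = M) := by
    rw [Finset.mem_filter, Finset.mem_Iic]
    refine ⟨Finsupp.le_def.mpr fun i => ?_, h2⟩
    simp only [Finsupp.coe_equivFunOnFinite_symm]
    induction i using Fin.lastCases with
    | last =>
        have : b * γ₀ (Fin.last e) ≤ M := by omega
        calc γ₀ (Fin.last e) ≤ b * γ₀ (Fin.last e) := Nat.le_mul_of_pos_left _ hbpos
        _ ≤ M := this
    | cast i =>
        have hle : γ₀ (Fin.castSucc i) ≤ ∑ j : Fin e, γ₀ (Fin.castSucc j) :=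
          Finset.single_le_sum (f := fun j : Fin e => γ₀ (Fin.castSucc j)) (fun j _ => Nat.zero_le _) (Finset.mem_univ i)
        have : a * (∑ j : Fin e, γ₀ (Fin.castSucc j)) ≤ M := by omega
        calc γ₀ (Fin.castSucc i) ≤ a * γ₀ (Fin.castSucc i) := Nat.le_mul_of_pos_left _ hapos
        _ ≤ a * (∑ j : Fin e, γ₀ (Fin.castSucc j)) := Nat.mul_le_mul_left a hle
        _ ≤ M := this
  have hcoeff : MvPolynomial.coeff
      (Finsupp.equivFunOnFinite.symm fun i : Fin e => γ₀ (Fin.castSucc i))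
      (polyAt e a b ι f M) = ι (MvPowerSeries.coeff γ₀ f) := by
    rw [polyAt, MvPolynomial.coeff_sum]
    rw [Finset.sum_eq_single_of_mem γ₀ hmem]
    · rw [MvPolynomial.coeff_monomial, if_pos rfl]
    · intro γ hγ hne
      rw [MvPolynomial.coeff_monomial, if_neg]
      intro heq
      apply hne
      have hcs : ∀ i : Fin e, γ (Fin.castSucc i) = γ₀ (Fin.castSucc i) := fun i => by
        have := congrArg (fun g => g i) (congrArg Finsupp.equivFunOnFinite heq)
        simpa using this
      rw [Finset.mem_filter] at hγ hmem
      have hs : (∑ i : Fin e, γ (Fin.castSucc i)) = ∑ i : Fin e, γ₀ (Fin.castSucc i) :=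
        Finset.sum_congr rfl fun i _ => hcs i
      have hlast : γ (Fin.last e) = γ₀ (Fin.last e) := by
        have h1' := hγ.2
        have h2' := hmem.2
        rw [hs] at h1'
        have : b * γ (Fin.last e) = b * γ₀ (Fin.last e) := by omega
        exact Nat.eq_of_mul_eq_mul_left hbpos this
      ext i
      induction i using Fin.lastCases with
      | last => exact hlast
      | cast i => exact hcs i
  rw [h0] at hcoeff
  simp only [MvPolynomial.coeff_zero] at hcoeff
  exact h1 ((map_eq_zero_iff ι ι.injective).mp hcoeff.symm)

/-- Genericity of the weighted order under substitution: if the support of `f` lies in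
the half-space `a|α| + bs ≥ aN` and meets the hyperplane `a|α| + bs = aN`, then for
sufficiently general `λ` (outside the zero locus of some nonzero polynomial) the order
of `β(f)` is exactly `aN`; and if the support is not contained in that half-space, then
for general `λ` the order of `β(f)` is strictly smaller than `aN`. -/
theorem stmt_18 (e a b : ℕ) (hapos : 0 < a) (hbpos : 0 < b)
    {k' k'' : Type*} [Field k'] [Field k''] [Infinite k''] (ι : k' →+* k'')
    (f : MvPowerSeries (Fin (e + 1)) k') (N : ℕ) :
    ((∀ γ : Fin (e + 1) →₀ ℕ, MvPowerSeries.coeff γ f ≠ 0 →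
        a * N ≤ a * (∑ i : Fin e, γ (Fin.castSucc i)) + b * γ (Fin.last e)) →
      (∃ γ : Fin (e + 1) →₀ ℕ, MvPowerSeries.coeff γ f ≠ 0 ∧
        a * (∑ i : Fin e, γ (Fin.castSucc i)) + b * γ (Fin.last e) = a * N) →
      ∃ P : MvPolynomial (Fin e) k'', P ≠ 0 ∧
        ∀ lam : Fin e → k'', MvPolynomial.eval lam P ≠ 0 →
          (weightedSubst e a b ι lam f).order = (a * N : ℕ)) ∧
    ((∃ γ : Fin (e + 1) →₀ ℕ, MvPowerSeries.coeff γ f ≠ 0 ∧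
        a * (∑ i : Fin e, γ (Fin.castSucc i)) + b * γ (Fin.last e) < a * N) →
      ∃ P : MvPolynomial (Fin e) k'', P ≠ 0 ∧
        ∀ lam : Fin e → k'', MvPolynomial.eval lam P ≠ 0 →
          (weightedSubst e a b ι lam f).order < (a * N : ℕ)) := by
  constructor
  · rintro hsupp ⟨γ₀, hc, hw⟩
    refine ⟨polyAt e a b ι f (a * N),
      polyAt_ne_zero e a b hapos hbpos ι f (a * N) γ₀ hc hw, fun lam hlam => ?_⟩
    rw [PowerSeries.order_eq_nat]
    constructor
    · rw [← eval_polyAt]; exact hlam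
    · intro i hi
      rw [weightedSubst, PowerSeries.coeff_mk]
      apply Finset.sum_eq_zero
      intro γ hγ
      rw [Finset.mem_filter] at hγ
      have hz : MvPowerSeries.coeff γ f = 0 := by
        by_contra hne
        have := hsupp γ hne
        omega
      rw [hz, map_zero, mul_zero]
  · rintro ⟨γ₀, hc, hw⟩
    set M := a * (∑ i : Fin e, γ₀ (Fin.castSucc i)) + b * γ₀ (Fin.last e) with hM
    refine ⟨polyAt e a b ι f M,
      polyAt_ne_zero e a b hapos hbpos ι f M γ₀ hc rfl, fun lam hlam => ?_⟩
    have hcoeff : PowerSeries.coeff M (weightedSubst e a b ι lam f) ≠ 0 := by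
      rw [← eval_polyAt]; exact hlam
    exact lt_of_le_of_lt (PowerSeries.order_le M hcoeff) (by exact_mod_cast hw)
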